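/- Let m, N ≥ 1, let z₁,…,z_N ∈ ℂ^m, let u₁, u₂ : [0,∞) → [0,∞), let B ∈ ℂ^{m×m} be invertible and c ∈ ℂ^m. If the pair (t, M), with t ∈ ℂ^m and M ∈ ℂ^{m×m} Hermitian positive definite, satisfies the complex M-estimating equations for the data (z₁,…,z_N), then the pair (B·t + c, B·M·Bᴴ) satisfies the complex M-estimating equations for the transformed data (B·z₁ + c, …, B·z_N + c). -/

import Mathlib

open Matrix
open scoped ComplexOrder

noncomputable section

/-- `d²(z,t;M) = (z−t)ᴴM⁻¹(z−t)` (a nonnegative real number when `M` is Hermitian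
positive definite; we take the real part). -/
def dsqC {m : ℕ} (z t : Fin m → ℂ) (M : Matrix (Fin m) (Fin m) ℂ) : ℝ :=
  (star (z - t) ⬝ᵥ (M⁻¹ *ᵥ (z - t))).re

/-- The pair `(t, M)`, with `M` Hermitian positive definite, satisfies the complex
M-estimating equations for the data `z₁,…,z_N`:
`(1/N)∑ₙ u₁(d(zₙ,t;M))·(zₙ−t) = 0` and
`(1/N)∑ₙ u₂(d²(zₙ,t;M))·(zₙ−t)(zₙ−t)ᴴ = M`, with `d = √(d²)`. -/
def SolvesCMEq {m N : ℕ} (z : Fin N → Fin m → ℂ) (u₁ u₂ : ℝ → ℝ)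
    (t : Fin m → ℂ) (M : Matrix (Fin m) (Fin m) ℂ) : Prop :=
  M.PosDef ∧
  (N : ℂ)⁻¹ • ∑ n, (u₁ (Real.sqrt (dsqC (z n) t M)) : ℂ) • (z n - t) = 0 ∧
  (N : ℂ)⁻¹ • ∑ n, (u₂ (dsqC (z n) t M) : ℂ) • vecMulVec (z n - t) (star (z n - t)) = M

lemma quadform_invariant {m : ℕ} (B M : Matrix (Fin m) (Fin m) ℂ)
    (hB : IsUnit B.det) (w : Fin m → ℂ) :
    star (B *ᵥ w) ⬝ᵥ ((B * M * Bᴴ)⁻¹ *ᵥ (B *ᵥ w)) = star w ⬝ᵥ (M⁻¹ *ᵥ w) := by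
  have hBH : IsUnit Bᴴ.det := by
    rw [Matrix.det_conjTranspose]; exact hB.star
  rw [Matrix.mul_inv_rev, Matrix.mul_inv_rev, Matrix.star_mulVec, Matrix.mulVec_mulVec,
    Matrix.dotProduct_mulVec, Matrix.dotProduct_mulVec, Matrix.vecMul_vecMul]
  congr 1
  simp only [← Matrix.mul_assoc]
  rw [Matrix.mul_nonsing_inv Bᴴ hBH, Matrix.one_mul, Matrix.mul_assoc,
    Matrix.nonsing_inv_mul B hB, Matrix.mul_one]

lemma dsqC_invariant {m : ℕ} (B M : Matrix (Fin m) (Fin m) ℂ)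
    (hB : IsUnit B.det) (zn t : Fin m → ℂ) (c : Fin m → ℂ) :
    dsqC (B *ᵥ zn + c) (B *ᵥ t + c) (B * M * Bᴴ) = dsqC zn t M := by
  unfold dsqC
  rw [add_sub_add_right_eq_sub, ← Matrix.mulVec_sub, quadform_invariant B M hB]

lemma vecMulVec_mulVec' {m : ℕ} (B : Matrix (Fin m) (Fin m) ℂ) (w : Fin m → ℂ) :
    vecMulVec (B *ᵥ w) (star (B *ᵥ w)) = B * vecMulVec w (star w) * Bᴴ := by
  ext i j
  simp only [vecMulVec_apply, Matrix.mul_apply, Matrix.mulVec, dotProduct,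
    Pi.star_apply, Matrix.conjTranspose_apply, vecMulVec_apply, Finset.sum_mul,
    Finset.mul_sum, star_sum, star_mul']
  congr 1; ext k
  congr 1; ext l
  ring

lemma posDef_conj {m : ℕ} (B M : Matrix (Fin m) (Fin m) ℂ)
    (hB : IsUnit B.det) (hM : M.PosDef) : (B * M * Bᴴ).PosDef := by
  refine Matrix.posDef_iff_dotProduct_mulVec.mpr ⟨?_, fun x hx => ?_⟩
  · unfold Matrix.IsHermitian
    rw [Matrix.conjTranspose_mul, Matrix.conjTranspose_mul,
      Matrix.conjTranspose_conjTranspose, hM.isHermitian.eq, Matrix.mul_assoc]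
  · have hBH : IsUnit Bᴴ.det := by
      rw [Matrix.det_conjTranspose]; exact hB.star
    have hy : Bᴴ *ᵥ x ≠ 0 := by
      intro h
      apply hx
      have hinj := (Matrix.mulVec_injective_iff_isUnit (A := Bᴴ)).2 ((Matrix.isUnit_iff_isUnit_det Bᴴ).2 hBH)
      have : Bᴴ *ᵥ x = Bᴴ *ᵥ 0 := by rw [h, Matrix.mulVec_zero]
      exact hinj this
    have key : star x ⬝ᵥ ((B * M * Bᴴ) *ᵥ x) = star (Bᴴ *ᵥ x) ⬝ᵥ (M *ᵥ (Bᴴ *ᵥ x)) := by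
      rw [Matrix.star_mulVec, Matrix.conjTranspose_conjTranspose,
        ← Matrix.mulVec_mulVec, ← Matrix.mulVec_mulVec, Matrix.dotProduct_mulVec]
    rw [key]
    exact hM.dotProduct_mulVec_pos hy

/-- affine equivariance of the complex M-estimating equations: if
`(t, M)` solves them for the data `(zₙ)` and `B` is invertible, then
`(B·t + c, B·M·Bᴴ)` solves them for the data `(B·zₙ + c)`. -/
theorem stmt9 (m N : ℕ) (hm : 1 ≤ m) (hN : 1 ≤ N)
    (z : Fin N → Fin m → ℂ) (u₁ u₂ : ℝ → ℝ)
    (B : Matrix (Fin m) (Fin m) ℂ) (hB : IsUnit B.det) (c : Fin m → ℂ)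
    (t : Fin m → ℂ) (M : Matrix (Fin m) (Fin m) ℂ)
    (hsol : SolvesCMEq z u₁ u₂ t M) :
    SolvesCMEq (fun n => B *ᵥ z n + c) u₁ u₂ (B *ᵥ t + c) (B * M * Bᴴ) := by
  obtain ⟨hpd, h1, h2⟩ := hsol
  have hdiff : ∀ n, (B *ᵥ z n + c) - (B *ᵥ t + c) = B *ᵥ (z n - t) := fun n => by
    rw [add_sub_add_right_eq_sub, ← Matrix.mulVec_sub]
  refine ⟨posDef_conj B M hB hpd, ?_, ?_⟩
  · calc (N : ℂ)⁻¹ • ∑ n, (u₁ (Real.sqrt (dsqC (B *ᵥ z n + c) (B *ᵥ t + c) (B * M * Bᴴ))) : ℂ)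
          • ((B *ᵥ z n + c) - (B *ᵥ t + c))
        = (N : ℂ)⁻¹ • ∑ n, (u₁ (Real.sqrt (dsqC (z n) t M)) : ℂ) • (B *ᵥ (z n - t)) := by
          simp only [dsqC_invariant B M hB, hdiff]
      _ = B *ᵥ ((N : ℂ)⁻¹ • ∑ n, (u₁ (Real.sqrt (dsqC (z n) t M)) : ℂ) • (z n - t)) := by
          rw [Matrix.mulVec_smul]
          congr 1
          rw [← Matrix.mulVecLin_apply, map_sum]
          simp only [_root_.map_smul, Matrix.mulVecLin_apply, Matrix.mulVec_smul]
      _ = 0 := by rw [h1, Matrix.mulVec_zero]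
  · calc (N : ℂ)⁻¹ • ∑ n, (u₂ (dsqC (B *ᵥ z n + c) (B *ᵥ t + c) (B * M * Bᴴ)) : ℂ)
          • vecMulVec ((B *ᵥ z n + c) - (B *ᵥ t + c)) (star ((B *ᵥ z n + c) - (B *ᵥ t + c)))
        = (N : ℂ)⁻¹ • ∑ n, (u₂ (dsqC (z n) t M) : ℂ)
            • (B * vecMulVec (z n - t) (star (z n - t)) * Bᴴ) := by
          simp only [dsqC_invariant B M hB, hdiff, vecMulVec_mulVec']
      _ = B * ((N : ℂ)⁻¹ • ∑ n, (u₂ (dsqC (z n) t M) : ℂ)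
            • vecMulVec (z n - t) (star (z n - t))) * Bᴴ := by
          rw [Matrix.mul_smul, Matrix.smul_mul]
          congr 1
          rw [Finset.mul_sum, Finset.sum_mul]
          refine Finset.sum_congr rfl fun n _ => ?_
          rw [Matrix.mul_smul, Matrix.smul_mul]
      _ = B * M * Bᴴ := by rw [h2]

end
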